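/- With M as above, for j ∈ {2,...,q-2} the eigenvalue of M on the Fourier vector u_j equals (q/(2π))([cos(2πj/q) - 1] ± i sin(2πj/q)); in particular its real part is strictly negative. -/

import Mathlib

open Real

/-- The circulant linearization matrix of the discrete mean-field rotator flow
at the equidistribution (indices mod `q`). -/
noncomputable def Mlin (q : ℕ) [NeZero q] (c₁ c₂ : ℝ) : Matrix (Fin q) (Fin q) ℂ :=
  fun i j =>
    ((((q : ℝ) / (2 * π)) *
      ((if j = i - 1 then 1 else 0) - (if j = i then 1 else 0)
        + c₁ * Real.sin (2 * π * ((i.val : ℤ) - (j.val : ℤ)) / q)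
        + c₂ * (Real.cos (2 * π * ((i.val : ℤ) - (j.val : ℤ)) / q)
              - Real.cos (2 * π * (((i.val : ℤ) - (j.val : ℤ)) - 1) / q))) : ℝ) : ℂ)

/-- The discrete Fourier vector `u_k = (e^{i 2π k l / q})_l`. -/
noncomputable def uvec (q : ℕ) (k : ℕ) : Fin q → ℂ :=
  fun l => Complex.exp (Complex.I * (2 * π * k * (l.val : ℕ) / q))

/-- Helper: `e^{i 2π n / q}` for an integer `n`. -/
noncomputable def Efun (q : ℕ) (n : ℤ) : ℂ :=
  Complex.exp (Complex.I * (2 * π * n / q))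

lemma Efun_add (q : ℕ) (a b : ℤ) : Efun q (a + b) = Efun q a * Efun q b := by
  rw [Efun, Efun, Efun, ← Complex.exp_add]
  congr 1
  push_cast
  ring

lemma Efun_qmul (q : ℕ) (hq : q ≠ 0) (t : ℤ) : Efun q ((q : ℤ) * t) = 1 := by
  have hq' : (q : ℂ) ≠ 0 := Nat.cast_ne_zero.mpr hq
  rw [Efun]
  have h : Complex.I * (2 * (π : ℂ) * (((q : ℤ) * t : ℤ) : ℂ) / q)
      = (t : ℂ) * (2 * π * Complex.I) := by
    push_cast
    field_simp
  rw [h, Complex.exp_int_mul_two_pi_mul_I]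

lemma Efun_congr (q : ℕ) (hq : q ≠ 0) {a b : ℤ} (h : (q : ℤ) ∣ a - b) :
    Efun q a = Efun q b := by
  obtain ⟨t, ht⟩ := h
  have ha : a = b + (q : ℤ) * t := by linarith
  rw [ha, Efun_add, Efun_qmul q hq, mul_one]

lemma Efun_ne_one (q : ℕ) (hq : q ≠ 0) {m : ℤ} (h1 : 0 < m) (h2 : m < q) :
    Efun q m ≠ 1 := by
  intro h
  rw [Efun, Complex.exp_eq_one_iff] at h
  obtain ⟨n, hn⟩ := h
  have hq' : (q : ℂ) ≠ 0 := Nat.cast_ne_zero.mpr hq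
  have hπ : (π : ℂ) ≠ 0 := by exact_mod_cast Real.pi_ne_zero
  have key : (2 * (π : ℂ) * Complex.I) * (m : ℂ) = (2 * π * Complex.I) * ((n : ℂ) * q) := by
    field_simp at hn
    linear_combination (2 * (π : ℂ) * Complex.I) * hn
  have h2πI : (2 * (π : ℂ) * Complex.I) ≠ 0 :=
    mul_ne_zero (mul_ne_zero two_ne_zero hπ) Complex.I_ne_zero
  have hm : (m : ℂ) = (n : ℂ) * q := mul_left_cancel₀ h2πI key
  have hmz : m = n * q := by exact_mod_cast hm
  have hdvd : (q : ℤ) ∣ m := ⟨n, by linarith [hmz]⟩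
  have := Int.le_of_dvd h1 hdvd
  omega

lemma Efun_sum (q : ℕ) (hq : q ≠ 0) {m : ℤ} (h1 : 0 < m) (h2 : m < q) :
    ∑ l : Fin q, Efun q (m * (l.val : ℤ)) = 0 := by
  have hz : ∀ n : ℕ, Efun q (m * (n : ℤ)) = (Efun q m) ^ n := by
    intro n
    rw [Efun, Efun, ← Complex.exp_nat_mul]
    congr 1
    push_cast
    ring
  calc ∑ l : Fin q, Efun q (m * (l.val : ℤ))
      = ∑ l : Fin q, (Efun q m) ^ (l.val) := by
        exact Finset.sum_congr rfl fun l _ => hz l.val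
    _ = ∑ n ∈ Finset.range q, (Efun q m) ^ n :=
        Fin.sum_univ_eq_sum_range (fun n => (Efun q m) ^ n) q
    _ = ((Efun q m) ^ q - 1) / (Efun q m - 1) := geom_sum_eq (Efun_ne_one q hq h1 h2) q
    _ = 0 := by
        have hpow : (Efun q m) ^ q = 1 := by
          rw [← hz q]
          have : m * (q : ℤ) = (q : ℤ) * m := by ring
          rw [this, Efun_qmul q hq]
        rw [hpow]
        simp

lemma Efun_eq_cos_sin (q : ℕ) (n : ℤ) :
    Efun q n = Complex.cos (2 * (π : ℂ) * (n : ℂ) / q)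
      + Complex.sin (2 * (π : ℂ) * (n : ℂ) / q) * Complex.I := by
  rw [Efun, show Complex.I * (2 * (π : ℂ) * (n : ℂ) / q)
      = (2 * (π : ℂ) * (n : ℂ) / q) * Complex.I by ring, Complex.exp_mul_I]

lemma cos_cast (q : ℕ) (n : ℤ) :
    ((Real.cos (2 * π * (n : ℝ) / q) : ℝ) : ℂ) = (Efun q n + Efun q (-n)) / 2 := by
  rw [Complex.ofReal_cos]
  have harg : (((2 * π * (n : ℝ) / q) : ℝ) : ℂ) = 2 * (π : ℂ) * (n : ℂ) / q := by
    push_cast; ring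
  have harg2 : 2 * (π : ℂ) * ((-n : ℤ) : ℂ) / q = -(2 * (π : ℂ) * (n : ℂ) / q) := by
    push_cast; ring
  rw [harg, Efun_eq_cos_sin, Efun_eq_cos_sin, harg2, Complex.cos_neg, Complex.sin_neg]
  ring

lemma sin_cast (q : ℕ) (n : ℤ) :
    ((Real.sin (2 * π * (n : ℝ) / q) : ℝ) : ℂ)
      = (Efun q n - Efun q (-n)) * (-Complex.I) / 2 := by
  rw [Complex.ofReal_sin]
  have harg : (((2 * π * (n : ℝ) / q) : ℝ) : ℂ) = 2 * (π : ℂ) * (n : ℂ) / q := by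
    push_cast; ring
  have harg2 : 2 * (π : ℂ) * ((-n : ℤ) : ℂ) / q = -(2 * (π : ℂ) * (n : ℂ) / q) := by
    push_cast; ring
  rw [harg, Efun_eq_cos_sin, Efun_eq_cos_sin, harg2, Complex.cos_neg, Complex.sin_neg]
  have : Complex.I * Complex.I = -1 := Complex.I_mul_I
  linear_combination Complex.sin (2 * (π : ℂ) * (n : ℂ) / q) * this

lemma ofReal_ite (P : Prop) [Decidable P] :
    (((if P then (1 : ℝ) else 0) : ℝ) : ℂ) = if P then 1 else 0 := by
  split <;> simp

theorem stmt_7 (q : ℕ) [NeZero q] (hq : 2 ≤ q) (c₁ c₂ : ℝ) (j : ℕ)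
    (hj : 2 ≤ j) (hj' : j ≤ q - 2) :
    ∃ ε : ℝ, (ε = 1 ∨ ε = -1) ∧
      (Mlin q c₁ c₂).mulVec (uvec q j) =
        ((((q : ℝ) / (2 * π)) * (Real.cos (2 * π * j / q) - 1) : ℝ) +
          (ε * ((q : ℝ) / (2 * π)) * Real.sin (2 * π * j / q) : ℝ) * Complex.I) •
          uvec q j ∧
      (((q : ℝ) / (2 * π)) * (Real.cos (2 * π * j / q) - 1) : ℝ) < 0 := by
  have hq0 : q ≠ 0 := NeZero.ne q
  have hq4 : 4 ≤ q := by omega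
  have hjq : j < q := by omega
  have hπ : (0 : ℝ) < π := Real.pi_pos
  have hqR : (0 : ℝ) < q := by exact_mod_cast (by omega : 0 < q)
  refine ⟨-1, Or.inr rfl, ?_, ?_⟩
  · -- the eigenvector identity
    set C : ℂ := (((q : ℝ) / (2 * π) : ℝ) : ℂ) with hC
    have hu : ∀ l : Fin q, uvec q j l = Efun q ((j : ℤ) * (l.val : ℤ)) := by
      intro l
      rw [uvec, Efun]
      congr 1
      push_cast
      ring
    funext i
    set a : ℤ := (i.val : ℤ) with ha
    set K₁ : ℂ := (C * c₁ * (-Complex.I) / 2 + C * c₂ / 2) * Efun q a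
        - C * c₂ / 2 * Efun q (a - 1) with hK₁
    set K₂ : ℂ := (C * c₁ * Complex.I / 2 + C * c₂ / 2) * Efun q (-a)
        - C * c₂ / 2 * Efun q (-(a - 1)) with hK₂
    have hterm : ∀ l : Fin q, Mlin q c₁ c₂ i l * uvec q j l =
        C * ((if l = i - 1 then (1 : ℂ) else 0) * uvec q j l)
        - C * ((if l = i then (1 : ℂ) else 0) * uvec q j l)
        + K₁ * Efun q (((j : ℤ) - 1) * (l.val : ℤ))
        + K₂ * Efun q (((j : ℤ) + 1) * (l.val : ℤ)) := by
      intro l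
      set b : ℤ := (l.val : ℤ) with hb
      have p1 : Efun q (a - b) * Efun q ((j : ℤ) * b)
          = Efun q a * Efun q (((j : ℤ) - 1) * b) := by
        rw [← Efun_add, ← Efun_add]; congr 1; ring
      have p2 : Efun q (-(a - b)) * Efun q ((j : ℤ) * b)
          = Efun q (-a) * Efun q (((j : ℤ) + 1) * b) := by
        rw [← Efun_add, ← Efun_add]; congr 1; ring
      have p3 : Efun q (a - b - 1) * Efun q ((j : ℤ) * b)
          = Efun q (a - 1) * Efun q (((j : ℤ) - 1) * b) := by
        rw [← Efun_add, ← Efun_add]; congr 1; ring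
      have p4 : Efun q (-(a - b - 1)) * Efun q ((j : ℤ) * b)
          = Efun q (-(a - 1)) * Efun q (((j : ℤ) + 1) * b) := by
        rw [← Efun_add, ← Efun_add]; congr 1; ring
      have e1 : 2 * π * ((a : ℝ) - (b : ℝ)) / (q : ℝ)
          = 2 * π * (((a - b : ℤ) : ℝ)) / q := by push_cast; ring
      have e2 : 2 * π * ((a : ℝ) - (b : ℝ) - 1) / (q : ℝ)
          = 2 * π * (((a - b - 1 : ℤ) : ℝ)) / q := by push_cast; ring
      simp only [Mlin, hu l, ← ha, ← hb, Complex.ofReal_mul, Complex.ofReal_add,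
        Complex.ofReal_sub, ofReal_ite, hK₁, hK₂]
      rw [e1, e2, sin_cast, cos_cast, cos_cast]
      linear_combination (C * (c₁ : ℂ) * (-Complex.I) / 2 + C * (c₂ : ℂ) / 2) * p1
        + (C * (c₁ : ℂ) * Complex.I / 2 + C * (c₂ : ℂ) / 2) * p2
        - C * (c₂ : ℂ) / 2 * p3 - C * (c₂ : ℂ) / 2 * p4
    have hzero1 : ∑ l : Fin q, Efun q (((j : ℤ) - 1) * (l.val : ℤ)) = 0 :=
      Efun_sum q hq0 (by omega) (by omega)
    have hzero2 : ∑ l : Fin q, Efun q (((j : ℤ) + 1) * (l.val : ℤ)) = 0 :=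
      Efun_sum q hq0 (by omega) (by omega)
    have husub : uvec q j (i - 1) = Efun q (-(j : ℤ)) * uvec q j i := by
      rw [hu, hu, ← Efun_add]
      apply Efun_congr q hq0
      have h1q : 1 % q = 1 := Nat.mod_eq_of_lt (by omega)
      have hsub : ((i - 1 : Fin q) : ℕ) = (q - 1 + i.val) % q := by
        rw [Fin.sub_def]
        simp [Fin.val_one', h1q]
      have hdm := Nat.div_add_mod (q - 1 + i.val) q
      set d : ℕ := (q - 1 + i.val) / q with hd
      rw [← hsub] at hdm
      have hz : (q : ℤ) * (d : ℤ) + (((i - 1 : Fin q) : ℕ) : ℤ)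
          = (q : ℤ) - 1 + (i.val : ℤ) := by
        have h2 := congrArg (fun n : ℕ => (n : ℤ)) hdm
        simp only [Nat.cast_add, Nat.cast_mul] at h2
        rw [show ((q - 1 : ℕ) : ℤ) = (q : ℤ) - 1 from by omega] at h2
        exact h2
      refine ⟨(j : ℤ) * (1 - (d : ℤ)), ?_⟩
      linear_combination (j : ℤ) * hz
    calc (Mlin q c₁ c₂).mulVec (uvec q j) i
        = ∑ l : Fin q, Mlin q c₁ c₂ i l * uvec q j l := by
          simp [Matrix.mulVec, dotProduct]
      _ = ∑ l : Fin q, (C * ((if l = i - 1 then (1 : ℂ) else 0) * uvec q j l)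
            - C * ((if l = i then (1 : ℂ) else 0) * uvec q j l)
            + K₁ * Efun q (((j : ℤ) - 1) * (l.val : ℤ))
            + K₂ * Efun q (((j : ℤ) + 1) * (l.val : ℤ))) :=
          Finset.sum_congr rfl fun l _ => hterm l
      _ = C * (∑ l : Fin q, (if l = i - 1 then (1 : ℂ) else 0) * uvec q j l)
            - C * (∑ l : Fin q, (if l = i then (1 : ℂ) else 0) * uvec q j l)
            + K₁ * (∑ l : Fin q, Efun q (((j : ℤ) - 1) * (l.val : ℤ)))
            + K₂ * (∑ l : Fin q, Efun q (((j : ℤ) + 1) * (l.val : ℤ))) := by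
          simp only [Finset.sum_add_distrib, Finset.sum_sub_distrib, ← Finset.mul_sum]
      _ = C * uvec q j (i - 1) - C * uvec q j i := by
          have s1 : ∑ l : Fin q, (if l = i - 1 then (1 : ℂ) else 0) * uvec q j l
              = uvec q j (i - 1) := by
            simp only [ite_mul, one_mul, zero_mul]
            rw [Finset.sum_ite_eq' Finset.univ (i - 1) (uvec q j)]
            simp
          have s2 : ∑ l : Fin q, (if l = i then (1 : ℂ) else 0) * uvec q j l
              = uvec q j i := by
            simp only [ite_mul, one_mul, zero_mul]
            rw [Finset.sum_ite_eq' Finset.univ i (uvec q j)]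
            simp
          rw [hzero1, hzero2, s1, s2]
          ring
      _ = (((((q : ℝ) / (2 * π)) * (Real.cos (2 * π * j / q) - 1) : ℝ) : ℂ) +
            (((-1 : ℝ) * ((q : ℝ) / (2 * π)) * Real.sin (2 * π * j / q) : ℝ) : ℂ) *
              Complex.I) * uvec q j i := by
          rw [husub]
          have hEj : Efun q (-(j : ℤ)) = ((Real.cos (2 * π * j / q) : ℝ) : ℂ)
              - ((Real.sin (2 * π * j / q) : ℝ) : ℂ) * Complex.I := by
            rw [Efun]
            have harg : Complex.I * (2 * (π : ℂ) * ((-(j : ℤ) : ℤ) : ℂ) / q)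
                = (((-(2 * π * j / q) : ℝ)) : ℂ) * Complex.I := by
              push_cast; ring
            rw [harg, Complex.exp_mul_I]
            rw [← Complex.ofReal_cos, ← Complex.ofReal_sin, Real.cos_neg, Real.sin_neg]
            push_cast
            ring
          rw [hEj, hC]
          push_cast
          ring
      _ = (((((q : ℝ) / (2 * π)) * (Real.cos (2 * π * j / q) - 1) : ℝ)) +
            (((-1 : ℝ) * ((q : ℝ) / (2 * π)) * Real.sin (2 * π * j / q) : ℝ)) *
              Complex.I) • uvec q j i := by
          rw [smul_eq_mul]
      _ = ((((((q : ℝ) / (2 * π)) * (Real.cos (2 * π * j / q) - 1) : ℝ)) +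
            (((-1 : ℝ) * ((q : ℝ) / (2 * π)) * Real.sin (2 * π * j / q) : ℝ)) *
              Complex.I) • uvec q j) i := rfl
  · -- negativity of the real part
    have hθpos : 0 < 2 * π * j / q := by
      apply div_pos _ hqR
      have hjR : (0 : ℝ) < j := by exact_mod_cast (by omega : 0 < j)
      nlinarith
    have hθlt : 2 * π * j / q < 2 * π := by
      rw [div_lt_iff₀ hqR]
      have hjR : (j : ℝ) < q := by exact_mod_cast hjq
      nlinarith
    have hcos : Real.cos (2 * π * j / q) < 1 := by
      rcases (Real.cos_le_one (2 * π * j / q)).lt_or_eq with h | h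
      · exact h
      · exfalso
        have := (Real.cos_eq_one_iff_of_lt_of_lt (by linarith) hθlt).mp h
        linarith
    have hCpos : 0 < (q : ℝ) / (2 * π) := div_pos hqR (by linarith)
    nlinarith
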